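/- Let K, L be positive integers and let X ∈ ℂ^{K×L}. Let vec(X) ∈ ℂ^{KL} be the column-wise vectorization, i.e., vec(X)[lK + k] = X[k,l] for 0 ≤ k < K, 0 ≤ l < L. For integers k̃ and l̃, the vector v = (I_L ⊗ Π_K^{k̃}) · Π_{KL}^{K l̃} · vec(X) satisfies v[lK + k] = X[(k − k̃) mod K, (l − l̃) mod L] for all 0 ≤ k < K and 0 ≤ l < L. That is, the MD-CDDS precoding matrix of OTFS, C = (I_L ⊗ Π_K^{k̃}) Π_{KL}^{K l̃}, implements the cyclic Doppler shift by k̃ steps and the cyclic delay shift by l̃ steps of the delay-Doppler symbol matrix X. -/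

import Mathlib

open Matrix Complex Kronecker

/-- The `N × N` forward cyclic-shift matrix raised to the (integer) power `l`. -/
noncomputable def cyclicShift (N : ℕ) (l : ℤ) : Matrix (Fin N) (Fin N) ℂ :=
  Matrix.of fun p q => if ((p : ℕ) : ZMod N) = ((q : ℕ) : ZMod N) + (l : ZMod N) then 1 else 0

/-- Column-wise vectorization of a `K × L` matrix: `vec(X)[l·K + k] = X[k, l]`. -/
def vecCol {K L : ℕ} (hK : 0 < K) (X : Matrix (Fin K) (Fin L) ℂ) : Fin (K * L) → ℂ :=
  fun i => X ⟨(i : ℕ) % K, Nat.mod_lt _ hK⟩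
    ⟨(i : ℕ) / K, (Nat.div_lt_iff_lt_mul hK).mpr (lt_of_lt_of_eq i.isLt (Nat.mul_comm K L))⟩

/-- The index `l·K + k` of entry `X[k,l]` in the column-wise vectorization. -/
def vecIdx {K L : ℕ} (k : Fin K) (l : Fin L) : Fin (K * L) :=
  ⟨(l : ℕ) * K + (k : ℕ), by
    have h1 := k.isLt
    have h2 := l.isLt
    calc (l : ℕ) * K + (k : ℕ) < ((l : ℕ) + 1) * K := by nlinarith
      _ ≤ L * K := Nat.mul_le_mul_right K h2
      _ = K * L := Nat.mul_comm L K⟩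

/-- `a mod N` as an element of `Fin N`, for an integer `a`. -/
def modIdx {N : ℕ} (hN : 0 < N) (a : ℤ) : Fin N :=
  ⟨(a % (N : ℤ)).toNat, by
    have h1 : 0 ≤ a % (N : ℤ) := Int.emod_nonneg a (by exact_mod_cast hN.ne')
    have h2 : a % (N : ℤ) < (N : ℤ) := Int.emod_lt_of_pos a (by exact_mod_cast hN)
    omega⟩

/-- The equivalence `Fin L × Fin K ≃ Fin (K·L)` sending `(l, k)` to `l·K + k`. -/
def colEquiv (K L : ℕ) : Fin L × Fin K ≃ Fin (K * L) :=
  finProdFinEquiv.trans (finCongr (Nat.mul_comm L K))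

/-- The `[k̃,l̃]`-step MD-CDDS precoding matrix of OTFS:
`C = (I_L ⊗ Π_K^{k̃}) Π_{KL}^{K·l̃}`, with the Kronecker product reindexed so that the
row/column index `l·K + k` corresponds to the pair `(l, k)`. -/
noncomputable def mdcddsOTFS (K L : ℕ) (kt lt : ℤ) : Matrix (Fin (K * L)) (Fin (K * L)) ℂ :=
  (Matrix.reindex (colEquiv K L) (colEquiv K L)
      ((1 : Matrix (Fin L) (Fin L) ℂ) ⊗ₖ cyclicShift K kt)) *
    cyclicShift (K * L) ((K : ℤ) * lt)

/-- A `Fin N` index equals `modIdx hN a` iff it is congruent to `a` mod `N`. -/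
lemma zmod_eq_iff_modIdx {N : ℕ} (hN : 0 < N) (q : Fin N) (a : ℤ) :
    ((q : ℕ) : ZMod N) = ((a : ℤ) : ZMod N) ↔ q = modIdx hN a := by
  have h1 : 0 ≤ a % (N : ℤ) := Int.emod_nonneg a (by exact_mod_cast hN.ne')
  have h2 : a % (N : ℤ) < (N : ℤ) := Int.emod_lt_of_pos a (by exact_mod_cast hN)
  rw [show ((q : ℕ) : ZMod N) = (((q : ℕ) : ℤ) : ZMod N) by push_cast; ring,
    ZMod.intCast_eq_intCast_iff, Int.ModEq]
  have hq := q.isLt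
  have hq' : ((q : ℕ) : ℤ) % (N : ℤ) = ((q : ℕ) : ℤ) :=
    Int.emod_eq_of_lt (by positivity) (by exact_mod_cast hq)
  rw [hq', Fin.ext_iff]
  simp only [modIdx]
  omega

/-- Multiplying a vector by the cyclic-shift matrix cyclically shifts the vector. -/
lemma cyclicShift_mulVec {N : ℕ} (hN : 0 < N) (l : ℤ) (v : Fin N → ℂ) (p : Fin N) :
    (cyclicShift N l *ᵥ v) p = v (modIdx hN ((p : ℤ) - l)) := by
  have key : ∀ q : Fin N, (((p : ℕ) : ZMod N) = ((q : ℕ) : ZMod N) + (l : ZMod N)) ↔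
      q = modIdx hN ((p : ℤ) - l) := by
    intro q
    rw [← zmod_eq_iff_modIdx hN q ((p : ℤ) - l)]
    push_cast
    constructor
    · intro h; rw [eq_sub_iff_add_eq, ← h]
    · intro h; rw [h]; ring
  simp only [mulVec, dotProduct, cyclicShift, Matrix.of_apply]
  simp only [key]
  simp

lemma colEquiv_apply {K L : ℕ} (k : Fin K) (l : Fin L) :
    colEquiv K L (l, k) = vecIdx k l := by
  simp [colEquiv, finProdFinEquiv, vecIdx, Fin.ext_iff]
  ring

/-- The Kronecker factor `I_L ⊗ Π_K^{k̃}` acts as a cyclic Doppler shift. -/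
lemma kron_mulVec {K L : ℕ} (hK : 0 < K) (kt : ℤ) (w : Fin (K * L) → ℂ)
    (k : Fin K) (l : Fin L) :
    ((Matrix.reindex (colEquiv K L) (colEquiv K L)
        ((1 : Matrix (Fin L) (Fin L) ℂ) ⊗ₖ cyclicShift K kt)) *ᵥ w) (vecIdx k l)
      = w (vecIdx (modIdx hK ((k : ℤ) - kt)) l) := by
  have hrow : (colEquiv K L).symm (vecIdx k l) = (l, k) := by
    rw [← colEquiv_apply, Equiv.symm_apply_apply]
  simp only [mulVec, dotProduct]
  rw [← Equiv.sum_comp (colEquiv K L)]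
  rw [Fintype.sum_prod_type]
  simp only [reindex_apply, submatrix_apply, hrow, kroneckerMap_apply,
    Equiv.symm_apply_apply, Matrix.one_apply]
  have hsplit : ∀ l' : Fin L, ∀ k' : Fin K,
      (if l = l' then (1 : ℂ) else 0) * cyclicShift K kt k k' * w (colEquiv K L (l', k'))
      = if l = l' then cyclicShift K kt k k' * w (colEquiv K L (l', k')) else 0 := by
    intro l' k'; split <;> simp
  simp only [hsplit, Finset.sum_ite_irrel, Finset.sum_const_zero, Finset.sum_ite_eq,
    Finset.mem_univ, if_true]
  have hms := cyclicShift_mulVec hK kt (fun k' => w (colEquiv K L (l, k'))) k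
  simp only [mulVec, dotProduct] at hms
  rw [hms, colEquiv_apply]

/-- Value of the shifted vectorization index. -/
lemma modIdx_mul_val (K L : ℕ) (hK : 0 < K) (hL : 0 < L) (k : Fin K) (l : Fin L) (lt : ℤ)
    (hKL : 0 < K * L) :
    ((modIdx hKL ((((l : ℕ) * K + (k : ℕ) : ℕ) : ℤ) - (K : ℤ) * lt)) : ℕ)
      = K * ((modIdx hL ((l : ℤ) - lt)) : ℕ) + (k : ℕ) := by
  set a : ℤ := (((l : ℕ) * K + (k : ℕ) : ℕ) : ℤ) - (K : ℤ) * lt with ha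
  set d : ℤ := ((l : ℤ) - lt) % (L : ℤ) with hd
  have hd0 : 0 ≤ d := Int.emod_nonneg _ (by exact_mod_cast hL.ne')
  have hdL : d < L := Int.emod_lt_of_pos _ (by exact_mod_cast hL)
  have hk := k.isLt
  have key : a % ((K * L : ℕ) : ℤ) = (K : ℤ) * d + (k : ℕ) := by
    have hdvd : ((K * L : ℕ) : ℤ) ∣ ((K : ℤ) * d + (k : ℕ)) - a := by
      have heq : ((K : ℤ) * d + (k : ℕ)) - a = (K : ℤ) * (d - ((l : ℤ) - lt)) := by
        push_cast [ha]; ring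
      rw [heq, hd, Int.emod_def]
      exact ⟨-(((l : ℤ) - lt) / L), by push_cast; ring⟩
    have hmod : a % ((K * L : ℕ) : ℤ) = ((K : ℤ) * d + (k : ℕ)) % ((K * L : ℕ) : ℤ) :=
      Int.ModEq.eq (Int.modEq_iff_dvd.mpr hdvd)
    rw [hmod]
    apply Int.emod_eq_of_lt
    · positivity
    · push_cast
      calc (K : ℤ) * d + (k : ℕ) < (K : ℤ) * d + K := by
            exact_mod_cast (add_lt_add_iff_left _).mpr (show ((k : ℕ) : ℤ) < K by exact_mod_cast hk)
        _ = (K : ℤ) * (d + 1) := by ring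
        _ ≤ (K : ℤ) * L := mul_le_mul_of_nonneg_left (by omega) (by positivity)
  have hdt : (d.toNat : ℤ) = d := Int.toNat_of_nonneg hd0
  have h2 : (K : ℤ) * d + ((k : ℕ) : ℤ) = ((K * d.toNat + (k : ℕ) : ℕ) : ℤ) := by
    push_cast [hdt]; ring
  simp only [modIdx, key, h2, Int.toNat_natCast]
  rfl

/-- the MD-CDDS precoding matrix of OTFS implements the cyclic Doppler shift by
`k̃` steps and the cyclic delay shift by `l̃` steps of the delay-Doppler symbol matrix `X`:
`((I_L ⊗ Π_K^{k̃}) Π_{KL}^{K l̃} vec(X))[l·K + k] = X[(k − k̃) mod K, (l − l̃) mod L]`. -/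
theorem mdcdds_otfs_shift (K L : ℕ) (hK : 0 < K) (hL : 0 < L)
    (X : Matrix (Fin K) (Fin L) ℂ) (kt lt : ℤ) (k : Fin K) (l : Fin L) :
    (mdcddsOTFS K L kt lt *ᵥ vecCol hK X) (vecIdx k l) =
      X (modIdx hK ((k : ℤ) - kt)) (modIdx hL ((l : ℤ) - lt)) := by
  have hKL : 0 < K * L := Nat.mul_pos hK hL
  rw [mdcddsOTFS, ← mulVec_mulVec, kron_mulVec hK]
  set k' : Fin K := modIdx hK ((k : ℤ) - kt) with hk'
  rw [cyclicShift_mulVec hKL]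
  have hidx : ((vecIdx k' l : Fin (K * L)) : ℕ) = (l : ℕ) * K + (k' : ℕ) := rfl
  have hval := modIdx_mul_val K L hK hL k' l lt hKL
  rw [vecCol]
  set i : Fin (K * L) := modIdx hKL (((vecIdx k' l : Fin (K * L)) : ℤ) - (K : ℤ) * lt) with hi
  have hival : (i : ℕ) = K * ((modIdx hL ((l : ℤ) - lt)) : ℕ) + (k' : ℕ) := by
    rw [hi]
    convert hval using 3
    rw [hidx]
  congr 1
  · apply Fin.ext
    simp only [hival]
    rw [Nat.mul_add_mod, Nat.mod_eq_of_lt k'.isLt]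
  · apply Fin.ext
    simp only [hival]
    have := k'.isLt
    rw [Nat.mul_add_div hK, Nat.div_eq_of_lt this, Nat.add_zero]
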